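/- Suppose q_n are the semi-regular denominators satisfying condition (C): b_n + a_n ≥ 2 for all large n. Then for all large n, q_{n+1} ≥ (1/2) b_{n+1} q_n. -/

import Mathlib

theorem srcf_condition_C_growth (a b q : ℤ → ℤ) (N : ℤ)
    (ha : ∀ n : ℤ, 1 ≤ n → a n = 1 ∨ a n = -1)
    (hb : ∀ n : ℤ, 1 ≤ n → 1 ≤ b n)
    (hba : ∀ n : ℤ, 1 ≤ n → 1 ≤ b n + a (n + 1))
    (hqm1 : q (-1) = 0) (hq0 : q 0 = 1)
    (hq : ∀ n : ℤ, 1 ≤ n → q n = b n * q (n - 1) + a n * q (n - 2))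
    (hC : ∀ n : ℤ, N ≤ n → 2 ≤ b n + a n) :
    ∃ M : ℤ, ∀ n : ℤ, M ≤ n →
      (1 / 2 : ℝ) * (b (n + 1) : ℝ) * (q n : ℝ) ≤ (q (n + 1) : ℝ) := by
  have key : ∀ n : ℤ, 0 ≤ n →
      1 ≤ q n ∧ 0 ≤ q (n - 1) ∧ (a (n + 1) = -1 → q (n - 1) + 1 ≤ q n) := by
    intro n
    refine Int.le_induction (motive := fun n _ => 1 ≤ q n ∧ 0 ≤ q (n - 1) ∧ (a (n + 1) = -1 → q (n - 1) + 1 ≤ q n)) ?_ ?_ n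
    · refine ⟨by norm_num [hq0], by norm_num [hqm1], fun _ => by norm_num [hqm1, hq0]⟩
    · intro n hn ih
      obtain ⟨h1, h2, h3⟩ := ih
      have e1 : n + 1 - 1 = n := by ring
      have e2 : n + 1 - 2 = n - 1 := by ring
      have hrec : q (n + 1) = b (n + 1) * q n + a (n + 1) * q (n - 1) := by
        have := hq (n + 1) (by omega)
        rwa [e1, e2] at this
      have hb1 : 1 ≤ b (n + 1) := hb (n + 1) (by omega)
      have ha1 : a (n + 1) = 1 ∨ a (n + 1) = -1 := ha (n + 1) (by omega)
      have hq1 : 1 ≤ q (n + 1) := by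
        rcases ha1 with h | h
        · rw [h] at hrec; nlinarith
        · rw [h] at hrec; have := h3 h; nlinarith
      rw [e1]
      refine ⟨hq1, by linarith, ?_⟩
      intro hneg
      have hba1 := hba (n + 1) (by omega)
      rw [hneg] at hba1
      rcases ha1 with h | h
      · rw [h] at hrec; nlinarith
      · rw [h] at hrec; have := h3 h; nlinarith
  refine ⟨max N 0, fun n hn => ?_⟩
  have hn0 : 0 ≤ n := le_trans (le_max_right N 0) hn
  obtain ⟨h1, h2, h3⟩ := key n hn0
  have e1 : n + 1 - 1 = n := by ring
  have e2 : n + 1 - 2 = n - 1 := by ring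
  have hrec : q (n + 1) = b (n + 1) * q n + a (n + 1) * q (n - 1) := by
    have := hq (n + 1) (by omega)
    rwa [e1, e2] at this
  have hb1 : 1 ≤ b (n + 1) := hb (n + 1) (by omega)
  have ha1 : a (n + 1) = 1 ∨ a (n + 1) = -1 := ha (n + 1) (by omega)
  have hC1 : 2 ≤ b (n + 1) + a (n + 1) := hC (n + 1) (by
    have := le_trans (le_max_left N 0) hn; omega)
  have hint : b (n + 1) * q n ≤ 2 * q (n + 1) := by
    rcases ha1 with h | h
    · rw [h] at hrec; nlinarith
    · rw [h] at hrec
      have hb3 : 3 ≤ b (n + 1) := by omega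
      have := h3 h
      nlinarith
  have hr : (b (n + 1) : ℝ) * (q n : ℝ) ≤ 2 * (q (n + 1) : ℝ) := by
    exact_mod_cast hint
  linarith
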